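/- Let (A, ·) be an associative algebra over a field K, α : A → A an algebra endomorphism, and d : A → A a derivation (d(a·b) = d(a)·b + a·d(b)) with d∘d = 0 and d∘α = α∘d. Define a bilinear bracket on A by [x, y] = α(x)·d(α(y)) − d(α(y))·α(x). Then (A, [·,·], α) is a hom-Leibniz algebra: [[x,y], α(z)] = [[x,z], α(y)] + [α(x), [y,z]] for all x, y, z ∈ A. -/
import Mathlib


/-- If `(A, ·)` is an associative algebra over a field `K`,
`α` an algebra endomorphism and `d` a derivation with `d∘d=0`, `d∘α=α∘d`, then the
bracket `[x,y] = α(x)·d(α(y)) − d(α(y))·α(x)` makes `(A, [·,·], α)` a hom-Leibniz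
algebra. -/
theorem stmt_9 {K A : Type*} [Field K] [AddCommGroup A] [Module K A]
    (mul : A →ₗ[K] A →ₗ[K] A) (α d : A →ₗ[K] A)
    (hassoc : ∀ x y z : A, mul (mul x y) z = mul x (mul y z))
    (hα : ∀ x y : A, α (mul x y) = mul (α x) (α y))
    (hd : ∀ x y : A, d (mul x y) = mul (d x) y + mul x (d y))
    (hd2 : ∀ x : A, d (d x) = 0)
    (hdα : ∀ x : A, d (α x) = α (d x)) :
    let br : A → A → A := fun x y => mul (α x) (d (α y)) - mul (d (α y)) (α x)
    ∀ x y z : A, br (br x y) (α z) = br (br x z) (α y) + br (α x) (br y z) := by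
  intro br x y z
  simp only [br, map_sub, map_add, hα, hd, hdα, hd2, hassoc, map_zero,
    LinearMap.sub_apply, LinearMap.add_apply, LinearMap.zero_apply, zero_add, add_zero]
  abel
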